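/- Let $d\ge 1$, $\mathbf{w}$ a weight in $\mathbb{R}^d$ with $w_1\ge\dots\ge w_d>0$, $\sum w_i=1$, $b>1$, $k_1>0$, $\lambda_1\in\mathbb{N}$, $n\in\mathbb{N}$ with $n>\lambda_1$, and $\mathbf{x}\in\mathbb{R}^d$. Suppose that for every real $H$ with $1\le H<b^{n-\lambda_1}$ there is no nonzero integer point $(z_0,\dots,z_d)$ with $|z_0+\sum_{i=1}^d z_i x_i|\le k_1 H^{-1}$ and $|z_i|\le H^{w_i}$ for $1\le i\le d$. Then for every real $Q$ with $1\le Q<b^{n-\lambda_1}$ there is no nonzero integer point $(m,p_1,\dots,p_d)$ satisfying $|m|\le Q$ and $|m x_i - p_i| < \frac{k_1}{d}Q^{-w_i}$ for all $1\le i\le d$. -/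

import Mathlib

/-- Transference: nonexistence of small solutions to the dual linear-form system implies
nonexistence of small solutions to the simultaneous system. -/
theorem stmt_6 (d : ℕ) (hd : 0 < d) (w : Fin d → ℝ)
    (hwmono : ∀ i j : Fin d, i ≤ j → w j ≤ w i) (hwpos : ∀ i, 0 < w i)
    (hwsum : ∑ i, w i = 1)
    (b : ℝ) (hb : 1 < b) (k₁ : ℝ) (hk₁ : 0 < k₁) (lam₁ n : ℕ) (hn : lam₁ < n)
    (x : Fin d → ℝ)
    (hdual : ∀ H : ℝ, 1 ≤ H → H < b ^ ((n : ℝ) - lam₁) →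
      ¬ ∃ z : Fin (d+1) → ℤ, z ≠ 0 ∧
        |(z 0 : ℝ) + ∑ i : Fin d, (z i.succ : ℝ) * x i| ≤ k₁ / H ∧
        ∀ i : Fin d, |(z i.succ : ℝ)| ≤ H ^ (w i)) :
    ∀ Q : ℝ, 1 ≤ Q → Q < b ^ ((n : ℝ) - lam₁) →
      ¬ ∃ z : Fin (d+1) → ℤ, z ≠ 0 ∧
        |(z 0 : ℝ)| ≤ Q ∧
        ∀ i : Fin d, |(z 0 : ℝ) * x i - (z i.succ : ℝ)| < (k₁ / d) * Q ^ (-(w i)) := by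
  intro Q hQ1 hQb
  rintro ⟨z, hz, hz0, hzi⟩
  have hQ0 : (0:ℝ) < Q := by linarith
  have hd1 : (1:ℝ) ≤ (d:ℝ) := by exact_mod_cast hd
  have hbpow : (1:ℝ) < b ^ ((n:ℝ) - lam₁) := by
    have hnl : (0:ℝ) < (n:ℝ) - lam₁ := by
      have : (lam₁:ℝ) < n := by exact_mod_cast hn
      linarith
    exact Real.one_lt_rpow_iff_of_pos (by linarith) |>.mpr (Or.inl ⟨hb, hnl⟩)
  -- k₁ < 1
  have hk1 : k₁ < 1 := by
    by_contra h
    push_neg at h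
    refine hdual 1 le_rfl hbpow ⟨Fin.cases 1 (fun _ => 0), ?_, ?_, ?_⟩
    · intro he
      have := congrFun he 0
      simp at this
    · simp
      linarith
    · intro i
      simp
  set m : ℤ := z 0 with hm
  by_cases hm0 : m = 0
  · -- trivial case: m = 0 forces all coordinates zero
    apply hz
    funext j
    simp only [Pi.zero_apply]
    refine Fin.cases ?_ ?_ j
    · exact hm0
    · intro i
      by_contra hne
      have h1 : (1:ℝ) ≤ |(z i.succ : ℝ)| := by
        have := Int.one_le_abs hne
        calc (1:ℝ) ≤ ((|z i.succ| : ℤ) : ℝ) := by exact_mod_cast this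
        _ = |(z i.succ : ℝ)| := by push_cast; ring
      have h2 := hzi i
      rw [hm0] at h2
      simp only [Int.cast_zero, zero_mul, zero_sub, abs_neg] at h2
      have hQw : Q ^ (-(w i)) ≤ 1 :=
        Real.rpow_le_one_of_one_le_of_nonpos hQ1 (by linarith [hwpos i])
      have h3 : (k₁ / d) * Q ^ (-(w i)) ≤ k₁ / d * 1 := by
        apply mul_le_mul_of_nonneg_left hQw
        positivity
      have hkd : k₁ / d ≤ k₁ := by
        rw [div_le_iff₀ (by linarith)]
        nlinarith
      linarith
  · -- main case
    set M := m.natAbs with hMdef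
    have hM0 : 0 < M := Int.natAbs_pos.mpr hm0
    haveI : NeZero M := ⟨hM0.ne'⟩
    have hMr : (M:ℝ) = |(m:ℝ)| := by
      rw [hMdef, Nat.cast_natAbs, Int.cast_abs]
    have hMr1 : (1:ℝ) ≤ (M:ℝ) := by exact_mod_cast hM0
    have hMQ : (M:ℝ) ≤ Q := by rw [hMr]; exact hz0
    set N : Fin d → ℕ := fun i => ⌊(M:ℝ) ^ (w i)⌋₊ with hNdef
    have hMpos : (0:ℝ) < (M:ℝ) := by linarith
    haveI : Nonempty (Fin d) := Fin.pos_iff_nonempty.mp hd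
    -- cardinality inequality
    have hcard : (M:ℝ) < ∏ i : Fin d, ((N i : ℝ) + 1) := by
      have h1 : (M:ℝ) = ∏ i : Fin d, (M:ℝ) ^ (w i) := by
        rw [← Real.rpow_sum_of_pos hMpos w Finset.univ, hwsum, Real.rpow_one]
      rw [h1]
      apply Finset.prod_lt_prod_of_nonempty
      · intro i _
        positivity
      · intro i _
        exact Nat.lt_floor_add_one _
      · exact Finset.univ_nonempty
    have hcardN : M < ∏ i : Fin d, (N i + 1) := by
      have : (M:ℝ) < ((∏ i : Fin d, (N i + 1) : ℕ) : ℝ) := by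
        push_cast
        exact hcard
      exact_mod_cast this
    -- pigeonhole
    have hcard2 : Fintype.card (ZMod M) < Fintype.card (∀ i : Fin d, Fin (N i + 1)) := by
      rw [ZMod.card, Fintype.card_pi]
      simpa using hcardN
    obtain ⟨u, u', hne, heq⟩ := Fintype.exists_ne_map_eq_of_card_lt
      (fun (u : ∀ i : Fin d, Fin (N i + 1)) => ((∑ i, z i.succ * (u i : ℤ) : ℤ) : ZMod M)) hcard2
    have heq' : ((∑ i, z i.succ * (u i : ℤ) : ℤ) : ZMod M)
        = ((∑ i, z i.succ * (u' i : ℤ) : ℤ) : ZMod M) := heq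
    set v : Fin d → ℤ := fun i => (u i : ℤ) - (u' i : ℤ) with hvdef
    have hvne : ∃ i, v i ≠ 0 := by
      by_contra hall
      push_neg at hall
      apply hne
      funext i
      have hvi := hall i
      rw [hvdef] at hvi
      simp only [sub_eq_zero] at hvi
      exact Fin.ext (by exact_mod_cast hvi)
    have hvbound : ∀ i, |(v i : ℝ)| ≤ (M:ℝ) ^ (w i) := by
      intro i
      have hub : (u i : ℝ) ≤ (N i : ℝ) := by
        exact_mod_cast Nat.lt_succ_iff.mp (u i).isLt
      have hub' : (u' i : ℝ) ≤ (N i : ℝ) := by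
        exact_mod_cast Nat.lt_succ_iff.mp (u' i).isLt
      have hfloor : (N i : ℝ) ≤ (M:ℝ) ^ (w i) := Nat.floor_le (by positivity)
      have h0 : (0:ℝ) ≤ (u i : ℝ) := by positivity
      have h0' : (0:ℝ) ≤ (u' i : ℝ) := by positivity
      rw [hvdef]
      push_cast
      rw [abs_le]
      constructor <;> linarith
    -- divisibility
    have hdvd : m ∣ ∑ i, z i.succ * v i := by
      have hzero : ((∑ i, z i.succ * v i : ℤ) : ZMod M) = 0 := by
        have hsplit : (∑ i, z i.succ * v i : ℤ)
            = (∑ i, z i.succ * (u i : ℤ)) - (∑ i, z i.succ * (u' i : ℤ)) := by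
          rw [← Finset.sum_sub_distrib]
          exact Finset.sum_congr rfl (fun i _ => by rw [hvdef]; ring)
        rw [hsplit, Int.cast_sub, heq', sub_self]
      have hdvd' : (M : ℤ) ∣ ∑ i, z i.succ * v i :=
        (ZMod.intCast_zmod_eq_zero_iff_dvd _ M).mp hzero
      rwa [hMdef, Int.natAbs_dvd] at hdvd'
    obtain ⟨c, hc⟩ := hdvd
    -- build dual solution
    set zd : Fin (d+1) → ℤ := Fin.cases (-c) v with hzd
    have hzds : ∀ i : Fin d, zd i.succ = v i := fun i => by simp [hzd]
    have hzd0 : zd 0 = -c := by simp [hzd]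
    refine hdual (M:ℝ) hMr1 (lt_of_le_of_lt hMQ hQb) ⟨zd, ?_, ?_, ?_⟩
    · obtain ⟨i, hi⟩ := hvne
      intro he
      apply hi
      have := congrFun he i.succ
      rw [hzds i] at this
      simpa using this
    · -- the linear form bound
      have hmabs : (0:ℝ) < |(m:ℝ)| := by rw [← hMr]; exact hMpos
      have hcr : ∑ i, (z i.succ : ℝ) * (v i : ℝ) = (m:ℝ) * (c:ℝ) := by
        have : ((∑ i, z i.succ * v i : ℤ) : ℝ) = ((m * c : ℤ) : ℝ) := by rw [hc]
        push_cast at this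
        exact this
      have key : (m:ℝ) * ((zd 0 : ℝ) + ∑ i : Fin d, (zd i.succ : ℝ) * x i)
          = ∑ i, (v i : ℝ) * ((m:ℝ) * x i - (z i.succ : ℝ)) := by
        have expand : ∑ i, (v i : ℝ) * ((m:ℝ) * x i - (z i.succ : ℝ))
            = (m:ℝ) * (∑ i, (v i : ℝ) * x i) - ∑ i, (z i.succ : ℝ) * (v i : ℝ) := by
          rw [Finset.mul_sum, ← Finset.sum_sub_distrib]
          exact Finset.sum_congr rfl (fun i _ => by ring)
        rw [expand, hcr, hzd0]
        simp only [hzds]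
        push_cast
        ring
      have hterm : ∀ i : Fin d, |(v i : ℝ)| * |(m:ℝ) * x i - (z i.succ : ℝ)| ≤ k₁ / d := by
        intro i
        have h1 := hvbound i
        have h2 := (hzi i).le
        have hMw : (M:ℝ) ^ (w i) ≤ Q ^ (w i) :=
          Real.rpow_le_rpow (by positivity) hMQ (hwpos i).le
        have hQw : Q ^ (w i) * Q ^ (-(w i)) = 1 := by
          rw [← Real.rpow_add hQ0]
          simp
        have hQwpos : (0:ℝ) < Q ^ (-(w i)) := Real.rpow_pos_of_pos hQ0 _
        have hstep : |(v i : ℝ)| * |(m:ℝ) * x i - (z i.succ : ℝ)|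
            ≤ (M:ℝ) ^ (w i) * ((k₁ / d) * Q ^ (-(w i))) :=
          mul_le_mul h1 h2 (abs_nonneg _) (by positivity)
        have hstep2 : (M:ℝ) ^ (w i) * ((k₁ / d) * Q ^ (-(w i)))
            ≤ Q ^ (w i) * ((k₁ / d) * Q ^ (-(w i))) := by
          apply mul_le_mul_of_nonneg_right hMw
          positivity
        have hstep3 : Q ^ (w i) * ((k₁ / d) * Q ^ (-(w i))) = (k₁ / d) * (Q ^ (w i) * Q ^ (-(w i))) := by
          ring
        rw [hstep3, hQw, mul_one] at hstep2
        linarith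
      have hsum : |∑ i, (v i : ℝ) * ((m:ℝ) * x i - (z i.succ : ℝ))| ≤ k₁ := by
        calc |∑ i, (v i : ℝ) * ((m:ℝ) * x i - (z i.succ : ℝ))|
            ≤ ∑ i, |(v i : ℝ) * ((m:ℝ) * x i - (z i.succ : ℝ))| :=
              Finset.abs_sum_le_sum_abs _ _
          _ ≤ ∑ _i : Fin d, k₁ / d := by
              apply Finset.sum_le_sum
              intro i _
              rw [abs_mul]
              exact hterm i
          _ = k₁ := by
              rw [Finset.sum_const, Finset.card_univ, Fintype.card_fin]
              rw [nsmul_eq_mul]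
              have hdne : (d:ℝ) ≠ 0 := (by linarith : (0:ℝ) < d).ne'
              field_simp
      have habs : |(m:ℝ)| * |(zd 0 : ℝ) + ∑ i : Fin d, (zd i.succ : ℝ) * x i|
          = |∑ i, (v i : ℝ) * ((m:ℝ) * x i - (z i.succ : ℝ))| := by
        rw [← abs_mul, key]
      rw [le_div_iff₀ hMpos, mul_comm, hMr, habs]
      exact hsum
    · intro i
      rw [hzds i]
      exact hvbound i
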